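/- Let (a_n) be defined by a_1 = 1 and ∑_{k=1}^n a_k (k/n)⌊n/k⌋ = 0 for all n ≥ 2. Then for all k ≥ 1, a_{2k} = (μ(2k) - μ(k))/(2k) and a_{2k+1} = μ(2k+1)/(2k+1). -/

import Mathlib

open ArithmeticFunction ArithmeticFunction.Moebius Finset

lemma lemA : ∀ n : ℕ, 1 ≤ n → ∑ k ∈ Finset.Icc 1 n, (μ k : ℤ) * (n / k : ℕ) = 1 := by
  intro n hn
  have hIcc : Finset.Icc 1 n = Finset.Ioc 0 n := rfl
  calc ∑ k ∈ Finset.Icc 1 n, (μ k : ℤ) * (n / k : ℕ)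
      = ∑ k ∈ Finset.Ioc 0 n, ∑ m ∈ Finset.Ioc 0 n, if k ∣ m then (μ k : ℤ) else 0 := by
        rw [hIcc]
        refine Finset.sum_congr rfl fun k hk => ?_
        rw [← Finset.sum_filter, Finset.sum_const, Nat.Ioc_filter_dvd_card_eq_div,
          nsmul_eq_mul, mul_comm]
    _ = ∑ m ∈ Finset.Ioc 0 n, ∑ k ∈ m.divisors, (μ k : ℤ) := by
        rw [Finset.sum_comm]
        refine Finset.sum_congr rfl fun m hm => ?_
        simp only [Finset.mem_Ioc] at hm
        rw [← Finset.sum_filter]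
        congr 1
        ext d
        simp only [Finset.mem_filter, Finset.mem_Ioc, Nat.mem_divisors]
        constructor
        · rintro ⟨⟨h1, h2⟩, h3⟩; exact ⟨h3, by omega⟩
        · rintro ⟨h1, h2⟩
          refine ⟨⟨Nat.pos_of_dvd_of_pos h1 hm.1, le_trans (Nat.le_of_dvd hm.1 h1) hm.2⟩, h1⟩
    _ = ∑ m ∈ Finset.Ioc 0 n, if m = 1 then (1:ℤ) else 0 := by
        refine Finset.sum_congr rfl fun m hm => ?_
        have := coe_mul_zeta_apply (f := (μ : ArithmeticFunction ℤ)) (x := m)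
        rw [moebius_mul_coe_zeta] at this
        rw [← this, one_apply]
    _ = 1 := by
        rw [Finset.sum_ite_eq' (Finset.Ioc 0 n) 1 (fun _ => (1:ℤ))]
        simp [hn]

noncomputable def cfun (n : ℕ) : ℤ := μ n - if 2 ∣ n then μ (n / 2) else 0

lemma lemB (n : ℕ) (hn : 2 ≤ n) :
    ∑ k ∈ Finset.Icc 1 n, (if 2 ∣ k then (μ (k / 2) : ℤ) else 0) * (n / k : ℕ) = 1 := by
  have himg : (Finset.Icc 1 n).filter (fun k => 2 ∣ k)
      = (Finset.Icc 1 (n / 2)).image (fun j => 2 * j) := by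
    ext k
    simp only [Finset.mem_filter, Finset.mem_Icc, Finset.mem_image]
    constructor
    · rintro ⟨⟨h1, h2⟩, j, rfl⟩
      exact ⟨j, ⟨by omega, Nat.le_div_iff_mul_le (by norm_num) |>.2 (by omega)⟩, rfl⟩
    · rintro ⟨j, ⟨hj1, hj2⟩, rfl⟩
      have := Nat.div_mul_le_self n 2
      exact ⟨⟨by omega, by omega⟩, j, rfl⟩
  calc ∑ k ∈ Finset.Icc 1 n, (if 2 ∣ k then (μ (k / 2) : ℤ) else 0) * (n / k : ℕ)
      = ∑ k ∈ (Finset.Icc 1 n).filter (fun k => 2 ∣ k), (μ (k / 2) : ℤ) * (n / k : ℕ) := by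
        rw [Finset.sum_filter]
        exact Finset.sum_congr rfl fun k _ => by split <;> simp
    _ = ∑ j ∈ Finset.Icc 1 (n / 2), (μ j : ℤ) * ((n / 2) / j : ℕ) := by
        rw [himg, Finset.sum_image (fun a _ b _ h => by omega)]
        refine Finset.sum_congr rfl fun j _ => ?_
        rw [Nat.mul_div_cancel_left j (by norm_num), Nat.div_div_eq_div_mul]
    _ = 1 := lemA _ (by omega)

lemma lemC (n : ℕ) (hn : 2 ≤ n) :
    ∑ k ∈ Finset.Icc 1 n, cfun k * (n / k : ℕ) = 0 := by
  simp only [cfun, sub_mul]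
  rw [Finset.sum_sub_distrib, lemA n (by omega), lemB n hn, sub_self]

lemma lemMain (a : ℕ → ℝ) (ha1 : a 1 = 1)
    (ha : ∀ n : ℕ, 2 ≤ n →
      ∑ k ∈ Finset.Icc 1 n, a k * ((k : ℝ) / n * (n / k : ℕ)) = 0) :
    ∀ n : ℕ, 1 ≤ n → (n : ℝ) * a n = (cfun n : ℝ) := by
  intro n
  induction n using Nat.strong_induction_on with
  | _ n IH =>
    intro hn
    rcases eq_or_lt_of_le hn with h1 | h2
    · simp [← h1, ha1, cfun]
    · have hn2 : 2 ≤ n := h2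
      have hn0 : (n : ℝ) ≠ 0 := by positivity
      have h2' : ∑ k ∈ Finset.Icc 1 n, (k : ℝ) * a k * ((n / k : ℕ) : ℝ) = 0 := by
        calc ∑ k ∈ Finset.Icc 1 n, (k : ℝ) * a k * ((n / k : ℕ) : ℝ)
            = (n : ℝ) * ∑ k ∈ Finset.Icc 1 n, a k * ((k : ℝ) / n * (n / k : ℕ)) := by
              rw [Finset.mul_sum]
              refine Finset.sum_congr rfl fun k hk => ?_
              field_simp
          _ = 0 := by rw [ha n hn2, mul_zero]
      obtain ⟨m, rfl⟩ : ∃ m, n = m + 1 := ⟨n - 1, by omega⟩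
      rw [Finset.sum_Icc_succ_top (by omega)] at h2'
      rw [Nat.div_self (by omega : 0 < m + 1)] at h2'
      have hsum : ∑ k ∈ Finset.Icc 1 m, (k : ℝ) * a k * (((m+1) / k : ℕ) : ℝ)
          = ∑ k ∈ Finset.Icc 1 m, (cfun k : ℝ) * (((m+1) / k : ℕ) : ℝ) := by
        refine Finset.sum_congr rfl fun k hk => ?_
        simp only [Finset.mem_Icc] at hk
        rw [IH k (by omega) hk.1]
      have hz := lemC (m+1) hn2
      rw [Finset.sum_Icc_succ_top (by omega), Nat.div_self (by omega : 0 < m + 1)] at hz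
      have hz2 : (∑ k ∈ Finset.Icc 1 m, cfun k * (((m+1) / k : ℕ) : ℤ)) = -cfun (m+1) := by
        simp only [Nat.cast_one, mul_one] at hz
        linarith
      have : ∑ k ∈ Finset.Icc 1 m, (cfun k : ℝ) * (((m+1) / k : ℕ) : ℝ) = -(cfun (m+1) : ℝ) := by
        have h3 := congrArg (fun z : ℤ => (z : ℝ)) hz2
        push_cast at h3
        exact h3
      rw [hsum, this] at h2'
      push_cast at h2' ⊢
      linarith

open ArithmeticFunction ArithmeticFunction.Moebius in
theorem stmt_14 (a : ℕ → ℝ) (ha1 : a 1 = 1)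
    (ha : ∀ n : ℕ, 2 ≤ n →
      ∑ k ∈ Finset.Icc 1 n, a k * ((k : ℝ) / n * (n / k : ℕ)) = 0) :
    ∀ k : ℕ, 1 ≤ k →
      a (2 * k) = ((μ (2 * k) : ℝ) - (μ k : ℝ)) / (2 * k) ∧
      a (2 * k + 1) = (μ (2 * k + 1) : ℝ) / (2 * k + 1) := by
  intro k hk
  have h1 := lemMain a ha1 ha (2 * k) (by omega)
  have h2 := lemMain a ha1 ha (2 * k + 1) (by omega)
  have hc1 : cfun (2 * k) = μ (2 * k) - μ k := by
    simp [cfun, Nat.mul_div_cancel_left k (by norm_num : 0 < 2)]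
  have hc2 : cfun (2 * k + 1) = μ (2 * k + 1) := by
    simp [cfun, Nat.two_dvd_ne_zero.mpr (by omega : (2 * k + 1) % 2 = 1)]
  rw [hc1] at h1; rw [hc2] at h2
  have hk0 : ((2 * k : ℕ) : ℝ) ≠ 0 := by positivity
  have hk1 : ((2 * k + 1 : ℕ) : ℝ) ≠ 0 := by positivity
  constructor
  · rw [eq_div_iff (by push_cast at hk0 ⊢; exact_mod_cast hk0)]
    push_cast at h1 ⊢
    linarith
  · rw [eq_div_iff (by push_cast at hk1 ⊢; exact_mod_cast hk1)]
    push_cast at h2 ⊢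
    linarith
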